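/- There exists a nonatomic congestion game on a two-edge parallel network with strictly increasing convex cost functions on both edges such that limsup_{M→∞} PoA(Γ_M) > 1. Concretely, with c₁(x) = x² and c₂ the piecewise-linear interpolation of x² at the points aᵏ (k ∈ ℤ) with a = 2, at the inflows M_k = a^{k−1}(a + b) with b = √((2a²+a)/3), the price of anarchy equals (c³ + (a+1)d² − ad)/(b³ + a³) ≈ 1.0059, where c = (√((a+1)² + 4a² + 4(a+1)b) − (a+1))/2 and d = a + b − c. -/

import Mathlib

open Filter Real Set

/-- Worst equilibrium cost of the two-edge parallel game with costs `c₁, c₂` and inflow `M`. -/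
noncomputable def WEq2 (c₁ c₂ : ℝ → ℝ) (M : ℝ) : ℝ :=
  sSup {C | ∃ x y : ℝ, 0 ≤ x ∧ 0 ≤ y ∧ x + y = M ∧
    (0 < x → c₁ x ≤ c₂ y) ∧ (0 < y → c₂ y ≤ c₁ x) ∧
    C = x * c₁ x + y * c₂ y}

/-- Optimum cost of the two-edge parallel game with costs `c₁, c₂` and inflow `M`. -/
noncomputable def Opt2 (c₁ c₂ : ℝ → ℝ) (M : ℝ) : ℝ :=
  sInf {C | ∃ x y : ℝ, 0 ≤ x ∧ 0 ≤ y ∧ x + y = M ∧ C = x * c₁ x + y * c₂ y}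

/-- Price of anarchy of the two-edge parallel game. -/
noncomputable def PoA2 (c₁ c₂ : ℝ → ℝ) (M : ℝ) : ℝ :=
  WEq2 c₁ c₂ M / Opt2 c₁ c₂ M

/-- The piecewise-linear interpolation of `x²` at the points `2^k`, `k ∈ ℤ`:
`interp y = (2^(k-1) + 2^k) y - 2^(k-1) 2^k` for `y ∈ [2^(k-1), 2^k]`, and `0` for `y ≤ 0`. -/
noncomputable def interp (y : ℝ) : ℝ :=
  if y ≤ 0 then 0
  else ((2:ℝ) ^ (⌈Real.logb 2 y⌉ - 1) + 2 ^ ⌈Real.logb 2 y⌉) * y -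
    2 ^ (⌈Real.logb 2 y⌉ - 1) * 2 ^ ⌈Real.logb 2 y⌉

lemma interp_nonpos {y : ℝ} (hy : y ≤ 0) : interp y = 0 := if_pos hy

lemma interp_zero : interp 0 = 0 := if_pos le_rfl

lemma two_zpow_pos (j : ℤ) : (0:ℝ) < 2 ^ j := zpow_pos two_pos j


lemma two_zpow_succ (j : ℤ) : (2:ℝ) ^ j = 2 * 2 ^ (j - 1) := by
  have h := zpow_add_one₀ (two_ne_zero (α := ℝ)) (j - 1)
  rw [sub_add_cancel] at h
  rw [h]; ring

lemma bracket {y : ℝ} (hy : 0 < y) :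
    (2:ℝ) ^ (⌈Real.logb 2 y⌉ - 1) < y ∧ y ≤ (2:ℝ) ^ ⌈Real.logb 2 y⌉ := by
  constructor
  · have h1 : (⌈Real.logb 2 y⌉ : ℝ) - 1 < Real.logb 2 y := by
      have := Int.ceil_lt_add_one (Real.logb 2 y); linarith
    have := (Real.lt_logb_iff_rpow_lt one_lt_two hy).mp h1
    rwa [show ((⌈Real.logb 2 y⌉ : ℝ) - 1) = ((⌈Real.logb 2 y⌉ - 1 : ℤ) : ℝ) by push_cast; ring,
      Real.rpow_intCast] at this
  · have h1 : Real.logb 2 y ≤ (⌈Real.logb 2 y⌉ : ℝ) := Int.le_ceil _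
    have := (Real.logb_le_iff_le_rpow one_lt_two hy).mp h1
    rwa [Real.rpow_intCast] at this

lemma interp_eq {y : ℝ} (hy : 0 < y) :
    interp y = 3 * (2:ℝ) ^ (⌈Real.logb 2 y⌉ - 1) * y - 2 * ((2:ℝ) ^ (⌈Real.logb 2 y⌉ - 1))^2 := by
  rw [interp, if_neg (not_le.mpr hy), two_zpow_succ ⌈Real.logb 2 y⌉]; ring

lemma interp_spec {y : ℝ} (hy : 0 < y) :
    ∃ j : ℤ, (2:ℝ)^(j-1) < y ∧ y ≤ 2 * (2:ℝ)^(j-1) ∧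
      interp y = 3 * (2:ℝ)^(j-1) * y - 2 * ((2:ℝ)^(j-1))^2 := by
  refine ⟨⌈Real.logb 2 y⌉, (bracket hy).1, ?_, interp_eq hy⟩
  have := (bracket hy).2
  rwa [two_zpow_succ ⌈Real.logb 2 y⌉] at this

lemma sq_le_interp {y : ℝ} (hy : 0 ≤ y) : y ^ 2 ≤ interp y := by
  rcases eq_or_lt_of_le hy with h | h
  · simp [← h, interp_zero]
  · obtain ⟨j, h1, h2, h3⟩ := interp_spec h
    nlinarith [two_zpow_pos (j-1)]

lemma interp_le {y : ℝ} (hy : 0 ≤ y) : interp y ≤ 3 * y ^ 2 := by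
  rcases eq_or_lt_of_le hy with h | h
  · simp [← h, interp_zero]
  · obtain ⟨j, h1, h2, h3⟩ := interp_spec h
    nlinarith [two_zpow_pos (j-1)]

lemma interp_pos {y : ℝ} (hy : 0 < y) : 0 < interp y :=
  lt_of_lt_of_le (by positivity) (sq_le_interp hy.le)

lemma interp_nonneg {y : ℝ} (hy : 0 ≤ y) : 0 ≤ interp y := by
  rcases eq_or_lt_of_le hy with h | h
  · simp [← h, interp_zero]
  · exact (interp_pos h).le

/-- dyadic trichotomy -/
lemma dyadic (k j : ℤ) : (2:ℝ)^k = 2^j ∨ 2*(2:ℝ)^k ≤ 2^j ∨ 2*(2:ℝ)^j ≤ 2^k := by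
  rcases lt_trichotomy k j with h | h | h
  · refine Or.inr (Or.inl ?_)
    have : (2:ℝ)^(k+1) ≤ 2^j := zpow_le_zpow_right₀ one_le_two (by omega)
    rwa [zpow_add_one₀ two_ne_zero, mul_comm] at this
  · exact Or.inl (by rw [h])
  · refine Or.inr (Or.inr ?_)
    have : (2:ℝ)^(j+1) ≤ 2^k := zpow_le_zpow_right₀ one_le_two (by omega)
    rwa [zpow_add_one₀ two_ne_zero, mul_comm] at this

/-- every supporting line lies below interp -/
lemma line_le_interp (k : ℤ) {y : ℝ} (hy : 0 ≤ y) :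
    3 * (2:ℝ)^(k-1) * y - 2 * ((2:ℝ)^(k-1))^2 ≤ interp y := by
  rcases eq_or_lt_of_le hy with h | h
  · rw [← h, interp_zero]; nlinarith [two_zpow_pos (k-1)]
  · obtain ⟨j, h1, h2, h3⟩ := interp_spec h
    rw [h3]
    rcases dyadic (k-1) (j-1) with he | hle | hle
    · rw [he]
    · nlinarith [two_zpow_pos (k-1), two_zpow_pos (j-1)]
    · nlinarith [two_zpow_pos (k-1), two_zpow_pos (j-1)]

lemma ceil_logb_eq_one {y : ℝ} (h1 : 1 < y) (h2 : y ≤ 2) : ⌈Real.logb 2 y⌉ = 1 := by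
  rw [Int.ceil_eq_iff]
  constructor
  · push_cast
    have := Real.logb_pos one_lt_two h1; linarith
  · push_cast
    calc Real.logb 2 y ≤ Real.logb 2 2 :=
          Real.logb_le_logb_of_le one_lt_two (by linarith) h2
      _ = 1 := Real.logb_self_eq_one one_lt_two

lemma interp_piece {y : ℝ} (h1 : 1 < y) (h2 : y ≤ 2) : interp y = 3 * y - 2 := by
  rw [interp, if_neg (by push_neg; linarith), ceil_logb_eq_one h1 h2]
  norm_num

lemma interp_strictMono : StrictMonoOn interp (Ici 0) := by
  intro x hx y hy hxy
  rcases eq_or_lt_of_le (mem_Ici.mp hx) with h | h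
  · rw [← h, interp_zero]
    exact interp_pos (by rw [← h] at hxy; exact hxy)
  · have hy' : 0 < y := lt_trans h hxy
    set j1 := ⌈Real.logb 2 x⌉ with hj1
    set j2 := ⌈Real.logb 2 y⌉ with hj2
    have a1 := (bracket h).1
    have a2 := (bracket h).2
    have b1 := (bracket hy').1
    have a3 := interp_eq h
    have b3 := interp_eq hy'
    rw [← hj1] at a1 a2 a3
    rw [← hj2] at b1 b3
    rw [two_zpow_succ j1] at a2
    have hj : j1 ≤ j2 :=
      Int.ceil_le_ceil (Real.logb_le_logb_of_le one_lt_two h hxy.le)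
    have hP1 := two_zpow_pos (j1 - 1)
    have hP2 := two_zpow_pos (j2 - 1)
    rcases eq_or_lt_of_le hj with he | hlt
    · rw [a3, b3, ← he]
      nlinarith
    · have h2P : 2 * (2:ℝ)^(j1-1) ≤ 2^(j2-1) := by
        rw [← two_zpow_succ j1]
        exact zpow_le_zpow_right₀ one_le_two (by omega)
      have hysq := sq_le_interp hy'.le
      rw [a3]
      nlinarith

lemma interp_convex : ConvexOn ℝ (Ici 0) interp := by
  refine ⟨convex_Ici 0, ?_⟩
  intro x hx y hy a b ha hb hab
  simp only [smul_eq_mul]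
  have hx' := mem_Ici.mp hx
  have hy' := mem_Ici.mp hy
  have hz : 0 ≤ a * x + b * y := by positivity
  rcases eq_or_lt_of_le hz with h | h
  · rw [← h, interp_zero]
    have := interp_nonneg hx'
    have := interp_nonneg hy'
    positivity
  · have he := interp_eq h
    set j := ⌈Real.logb 2 (a * x + b * y)⌉ with hj
    have lx := line_le_interp j hx'
    have ly := line_le_interp j hy'
    have lx' : a * (3 * (2:ℝ)^(j-1) * x - 2 * ((2:ℝ)^(j-1))^2) ≤ a * interp x :=
      mul_le_mul_of_nonneg_left lx ha
    have ly' : b * (3 * (2:ℝ)^(j-1) * y - 2 * ((2:ℝ)^(j-1))^2) ≤ b * interp y :=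
      mul_le_mul_of_nonneg_left ly hb
    rw [he]
    nlinarith [sq_nonneg ((2:ℝ)^(j-1))]

lemma interp_scale (m : ℤ) (y : ℝ) :
    interp ((2:ℝ)^m * y) = ((2:ℝ)^m)^2 * interp y := by
  rcases le_or_gt y 0 with h | h
  · rw [interp_nonpos h, interp_nonpos (by nlinarith [two_zpow_pos m]), mul_zero]
  · have hmy : 0 < (2:ℝ)^m * y := by positivity
    have hlog : Real.logb 2 ((2:ℝ)^m * y) = (m : ℝ) + Real.logb 2 y := by
      rw [Real.logb_mul (ne_of_gt (two_zpow_pos m)) (ne_of_gt h)]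
      congr 1
      rw [show ((2:ℝ)^m) = (2:ℝ)^(m:ℝ) by rw [Real.rpow_intCast], Real.logb_rpow two_pos (by norm_num)]
    have hceil : ⌈Real.logb 2 ((2:ℝ)^m * y)⌉ = m + ⌈Real.logb 2 y⌉ := by
      rw [hlog, add_comm, Int.ceil_add_intCast, add_comm]
    rw [interp, interp, if_neg (not_le.mpr hmy), if_neg (not_le.mpr h), hceil]
    have e1 : (2:ℝ)^(m + ⌈Real.logb 2 y⌉ - 1) = 2^m * 2^(⌈Real.logb 2 y⌉ - 1) := by
      rw [← zpow_add₀ (two_ne_zero (α := ℝ))]; ring_nf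
    have e2 : (2:ℝ)^(m + ⌈Real.logb 2 y⌉) = 2^m * 2^(⌈Real.logb 2 y⌉) := by
      rw [← zpow_add₀ (two_ne_zero (α := ℝ))]
    rw [e1, e2]; ring

section consts
-- constants
noncomputable def bb : ℝ := Real.sqrt (10/3)
noncomputable def ss : ℝ := Real.sqrt (25 + 12 * bb)
noncomputable def cc : ℝ := (ss - 3) / 2
noncomputable def dd : ℝ := 2 + bb - cc

lemma bb_pos : 0 < bb := Real.sqrt_pos.mpr (by norm_num)
lemma bb_sq : bb ^ 2 = 10 / 3 := Real.sq_sqrt (by norm_num)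
lemma bb_lb : 1.8257 ≤ bb := by nlinarith [bb_sq, bb_pos]
lemma bb_ub : bb ≤ 1.8258 := by nlinarith [bb_sq, bb_pos]
lemma ss_pos : 0 < ss := Real.sqrt_pos.mpr (by nlinarith [bb_pos])
lemma ss_sq : ss ^ 2 = 25 + 12 * bb := Real.sq_sqrt (by nlinarith [bb_pos])
lemma ss_lb : 6.8489 ≤ ss := by nlinarith [ss_sq, ss_pos, bb_lb]
lemma ss_ub : ss ≤ 6.8491 := by nlinarith [ss_sq, ss_pos, bb_ub]
lemma cc_quad : cc ^ 2 + 3 * cc = 4 + 3 * bb := by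
  rw [cc]; field_simp; nlinarith [ss_sq]
lemma cc_pos : 0 < cc := by rw [cc]; nlinarith [ss_lb]
lemma dd_gt_one : 1 < dd := by rw [dd, cc]; nlinarith [ss_ub, bb_lb]
lemma dd_le_two : dd ≤ 2 := by rw [dd, cc]; nlinarith [ss_lb, bb_ub]
lemma dd_pos : 0 < dd := lt_trans one_pos dd_gt_one
lemma cc_sq : cc ^ 2 = 3 * dd - 2 := by rw [dd]; nlinarith [cc_quad]
lemma interp_dd : interp dd = 3 * dd - 2 := interp_piece dd_gt_one dd_le_two
lemma sum_cd : cc + dd = 2 + bb := by rw [dd]; ring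

lemma numer_gt_denom : bb ^ 3 + 8 < cc ^ 3 + 3 * dd ^ 2 - 2 * dd := by
  rw [dd, cc]
  nlinarith [bb_lb, bb_ub, ss_lb, ss_ub, bb_sq, ss_sq,
    mul_nonneg (sub_nonneg.mpr bb_lb) (sub_nonneg.mpr ss_lb),
    mul_nonneg (sub_nonneg.mpr bb_ub) (sub_nonneg.mpr ss_ub)]

lemma denom_pos : 0 < bb ^ 3 + 8 := by nlinarith [bb_pos, sq_nonneg bb, mul_pos (mul_pos bb_pos bb_pos) bb_pos]
end consts

lemma interp_two : interp 2 = 4 := by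
  rw [interp_piece one_lt_two le_rfl]; norm_num

lemma weq_eq (k : ℤ) :
    WEq2 (fun x => x^2) interp ((2:ℝ)^(k-1) * (2+bb))
      = ((2:ℝ)^(k-1))^3 * (cc^3 + 3*dd^2 - 2*dd) := by
  have ht : (0:ℝ) < 2^(k-1) := two_zpow_pos _
  have htne : ((2:ℝ)^(k-1)) ≠ 0 := ne_of_gt ht
  set t := (2:ℝ)^(k-1) with hts
  have hscale : ∀ v : ℝ, interp (t * v) = t^2 * interp v := fun v => interp_scale (k-1) v
  have hset : {C | ∃ x y : ℝ, 0 ≤ x ∧ 0 ≤ y ∧ x + y = t * (2+bb) ∧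
      (0 < x → (fun x => x^2) x ≤ interp y) ∧ (0 < y → interp y ≤ (fun x => x^2) x) ∧
      C = x * (fun x => x^2) x + y * interp y} = {t^3 * (cc^3 + 3*dd^2 - 2*dd)} := by
    apply Set.eq_singleton_iff_unique_mem.mpr
    constructor
    · refine ⟨t * cc, t * dd, (mul_pos ht cc_pos).le, (mul_pos ht dd_pos).le, ?_, ?_, ?_, ?_⟩
      · rw [← sum_cd]; ring
      · intro _
        simp only []
        rw [hscale dd, interp_dd]
        nlinarith [cc_sq]
      · intro _
        simp only []
        rw [hscale dd, interp_dd]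
        nlinarith [cc_sq]
      · simp only []
        rw [hscale dd, interp_dd]
        nlinarith [cc_sq]
    · rintro C ⟨x, y, hx, hy, hsum, h1, h2, hC⟩
      simp only [] at h1 h2 hC
      have hM : 0 < t * (2 + bb) := by nlinarith [bb_pos]
      have hxpos : 0 < x := by
        rcases eq_or_lt_of_le hx with h | h
        · exfalso
          have hy' : 0 < y := by rw [← h] at hsum; linarith
          have := h2 hy'
          rw [← h] at this
          nlinarith [interp_pos hy']
        · exact h
      have hypos : 0 < y := by
        rcases eq_or_lt_of_le hy with h | h
        · exfalso
          have := h1 hxpos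
          rw [← h, interp_zero] at this
          nlinarith
        · exact h
      have heq : x^2 = interp y := le_antisymm (h1 hxpos) (h2 hypos)
      set u := x / t with hu
      set v := y / t with hv
      have hxu : x = t * u := by rw [hu]; field_simp
      have hyv : y = t * v := by rw [hv]; field_simp
      have hupos : 0 < u := div_pos hxpos ht
      have hvpos : 0 < v := div_pos hypos ht
      have huv : u + v = 2 + bb := by
        have : t * (u + v) = t * (2 + bb) := by rw [mul_add, ← hxu, ← hyv]; exact hsum
        exact mul_left_cancel₀ htne this
      have hueq : u^2 = interp v := by
        have h' : t^2 * u^2 = t^2 * interp v := by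
          rw [← hscale v, ← hyv, ← heq, hxu]; ring
        exact mul_left_cancel₀ (pow_ne_zero 2 htne) h'
      have hucc : u = cc := by
        rcases lt_trichotomy u cc with hlt | he | hgt
        · exfalso
          have hvd : dd < v := by linarith [sum_cd]
          have hm : interp dd < interp v :=
            interp_strictMono (mem_Ici.mpr dd_pos.le) (mem_Ici.mpr hvpos.le) hvd
          rw [interp_dd, ← cc_sq] at hm
          nlinarith [cc_pos]
        · exact he
        · exfalso
          have hvd : v < dd := by linarith [sum_cd]
          have hm : interp v < interp dd :=
            interp_strictMono (mem_Ici.mpr hvpos.le) (mem_Ici.mpr dd_pos.le) hvd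
          rw [interp_dd, ← cc_sq] at hm
          nlinarith [cc_pos]
      have hvdd : v = dd := by linarith [sum_cd]
      rw [hC, hxu, hyv, hscale v, hucc, hvdd, interp_dd]
      nlinarith [cc_sq]
  rw [WEq2, hset, csSup_singleton]

lemma cube_tangent {u : ℝ} (hu : 0 ≤ u) : bb^3 + 10 * (u - bb) ≤ u^3 := by
  have h10 : (10:ℝ) = 3 * bb^2 := by rw [bb_sq]; ring
  rw [h10]
  nlinarith [mul_nonneg (sq_nonneg (u - bb)) (by nlinarith [bb_pos] : (0:ℝ) ≤ u + 2*bb)]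

lemma vinterp_tangent {v : ℝ} (hv : 0 ≤ v) : 10 * v - 12 ≤ v * interp v := by
  rcases eq_or_lt_of_le hv with h | h
  · rw [← h, interp_zero]; norm_num
  · by_cases h1 : 1 < v
    · by_cases h2 : v ≤ 2
      · rw [interp_piece h1 h2]; nlinarith [sq_nonneg (v - 2)]
      · push_neg at h2
        have hs := sq_le_interp h.le
        nlinarith [mul_nonneg (by linarith : (0:ℝ) ≤ v - 2) (by nlinarith : (0:ℝ) ≤ v^2 + 2*v - 6),
          mul_le_mul_of_nonneg_left hs h.le]
    · push_neg at h1
      have hs := sq_le_interp h.le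
      nlinarith [mul_nonneg (by linarith : (0:ℝ) ≤ 2 - v) (by nlinarith : (0:ℝ) ≤ 6 - 2*v - v^2),
        mul_le_mul_of_nonneg_left hs h.le]

lemma opt_eq (k : ℤ) :
    Opt2 (fun x => x^2) interp ((2:ℝ)^(k-1) * (2+bb))
      = ((2:ℝ)^(k-1))^3 * (bb^3 + 8) := by
  have ht : (0:ℝ) < 2^(k-1) := two_zpow_pos _
  have htne : ((2:ℝ)^(k-1)) ≠ 0 := ne_of_gt ht
  set t := (2:ℝ)^(k-1) with hts
  have hscale : ∀ v : ℝ, interp (t * v) = t^2 * interp v := fun v => interp_scale (k-1) v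
  rw [Opt2]
  apply le_antisymm
  · apply csInf_le
    · refine ⟨0, ?_⟩
      rintro C ⟨x, y, hx, hy, _, hC⟩
      try simp only [] at hC
      rw [hC]
      have := interp_nonneg hy
      positivity
    · refine ⟨t * bb, t * 2, (mul_pos ht bb_pos).le, by positivity, by ring, ?_⟩
      rw [hscale 2, interp_two]
      ring
  · apply le_csInf
    · exact ⟨t * bb * (t*bb)^2 + t*2 * interp (t*2), t * bb, t * 2,
        (mul_pos ht bb_pos).le, by positivity, by ring, rfl⟩
    · rintro C ⟨x, y, hx, hy, hsum, hC⟩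
      try simp only [] at hC
      set u := x / t with hu
      set v := y / t with hv
      have hxu : x = t * u := by rw [hu]; field_simp
      have hyv : y = t * v := by rw [hv]; field_simp
      have hunn : 0 ≤ u := div_nonneg hx ht.le
      have hvnn : 0 ≤ v := div_nonneg hy ht.le
      have huv : u + v = 2 + bb := by
        have : t * (u + v) = t * (2 + bb) := by rw [mul_add, ← hxu, ← hyv]; exact hsum
        exact mul_left_cancel₀ htne this
      have key : bb^3 + 8 ≤ u^3 + v * interp v := by
        have := cube_tangent hunn
        have := vinterp_tangent hvnn
        linarith
      rw [hC, hxu, hyv, hscale v]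
      calc t^3 * (bb^3 + 8) ≤ t^3 * (u^3 + v * interp v) := by
            apply mul_le_mul_of_nonneg_left key (by positivity)
        _ = t * u * (t*u)^2 + t * v * (t^2 * interp v) := by ring

lemma poa_eq (k : ℤ) :
    PoA2 (fun x => x^2) interp ((2:ℝ)^(k-1) * (2+bb))
      = (cc^3 + 3*dd^2 - 2*dd) / (bb^3 + 8) := by
  have ht : (0:ℝ) < 2^(k-1) := two_zpow_pos _
  rw [PoA2, weq_eq, opt_eq]
  exact mul_div_mul_left _ _ (by positivity)

lemma weq_le {M : ℝ} (hM : 0 ≤ M) : WEq2 (fun x => x^2) interp M ≤ 4 * M^3 := by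
  apply Real.sSup_le
  · rintro C ⟨x, y, hx, hy, hsum, _, _, hC⟩
    try simp only [] at hC
    subst hsum
    rw [hC]
    nlinarith [interp_le hy, mul_le_mul_of_nonneg_left (interp_le hy) hy,
      mul_nonneg hx hy, mul_nonneg (mul_nonneg hx hx) hy, mul_nonneg (mul_nonneg hx hy) hy,
      mul_nonneg (mul_nonneg hy hy) hy, mul_nonneg (mul_nonneg hx hx) hx]
  · positivity

lemma opt_ge {M : ℝ} (hM : 0 ≤ M) : M^3 / 4 ≤ Opt2 (fun x => x^2) interp M := by
  apply le_csInf
  · exact ⟨M * M^2 + 0 * interp 0, M, 0, hM, le_rfl, by ring, rfl⟩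
  · rintro C ⟨x, y, hx, hy, hsum, hC⟩
    try simp only [] at hC
    subst hsum
    rw [hC]
    nlinarith [mul_le_mul_of_nonneg_left (sq_le_interp hy) hy,
      mul_nonneg (add_nonneg hx hy) (sq_nonneg (x - y))]

lemma poa_bound {M : ℝ} (hM : 1 ≤ M) : PoA2 (fun x => x^2) interp M ≤ 16 := by
  have hM0 : (0:ℝ) ≤ M := by linarith
  have hM3 : (0:ℝ) < M^3 := by positivity
  have h1 := weq_le hM0
  have h2 := opt_ge hM0
  rw [PoA2]
  calc WEq2 (fun x => x^2) interp M / Opt2 (fun x => x^2) interp M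
      ≤ 4 * M^3 / (M^3 / 4) := div_le_div₀ (by positivity) h1 (by positivity) h2
    _ = 16 := by field_simp; ring

lemma limsup_gt : 1 < Filter.limsup (fun M => PoA2 (fun x => x^2) interp M) atTop := by
  set ρ := (cc^3 + 3*dd^2 - 2*dd) / (bb^3 + 8) with hρdef
  have hρ : 1 < ρ := (one_lt_div denom_pos).mpr numer_gt_denom
  have hbdd : IsBoundedUnder (· ≤ ·) atTop (fun M => PoA2 (fun x => x^2) interp M) := by
    refine ⟨16, ?_⟩
    rw [eventually_map]
    filter_upwards [eventually_ge_atTop (1:ℝ)] with M hM using poa_bound hM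
  have hfreq : ∃ᶠ M in atTop, ρ ≤ PoA2 (fun x => x^2) interp M := by
    rw [frequently_atTop]
    intro a
    obtain ⟨n, hn⟩ := pow_unbounded_of_one_lt a (one_lt_two (α := ℝ))
    refine ⟨(2:ℝ)^((n:ℤ) + 1 - 1) * (2 + bb), ?_, ?_⟩
    · have h1 : (2:ℝ)^((n:ℤ) + 1 - 1) = 2^n := by
        rw [add_sub_cancel_right, zpow_natCast]
      rw [h1]
      nlinarith [bb_pos, pow_pos (two_pos (α := ℝ)) n]
    · rw [poa_eq ((n:ℤ) + 1)]
  exact lt_of_lt_of_le hρ (le_limsup_of_frequently_le hfreq hbdd)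


/-- Theorem 4.3: there is a two-edge game with strictly increasing convex costs whose price of
anarchy has `limsup_{M→∞} PoA(Γ_M) > 1`; concretely `c₁(x) = x²` and `c₂` the piecewise-linear
interpolation of `x²` at the points `2^k`, for which at the inflows `M_k = 2^(k-1)(2+b)` with
`b = √(10/3)` the price of anarchy equals `(c³ + 3d² - 2d)/(b³ + 8)`, where
`c = (√(25 + 12b) - 3)/2` and `d = 2 + b - c`. -/
theorem exists_convex_costs_limsup_poa_gt_one :
    ∃ c₁ c₂ : ℝ → ℝ,
      StrictMonoOn c₁ (Ici 0) ∧ StrictMonoOn c₂ (Ici 0) ∧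
      ConvexOn ℝ (Ici 0) c₁ ∧ ConvexOn ℝ (Ici 0) c₂ ∧
      1 < Filter.limsup (fun M => PoA2 c₁ c₂ M) atTop ∧
      c₁ = (fun x => x ^ 2) ∧ c₂ = interp ∧
      ∀ b c d : ℝ, b = Real.sqrt (10 / 3) →
        c = (Real.sqrt ((2 + 1) ^ 2 + 4 * 2 ^ 2 + 4 * (2 + 1) * b) - (2 + 1)) / 2 →
        d = 2 + b - c →
        ∀ k : ℤ, PoA2 c₁ c₂ ((2:ℝ) ^ (k - 1) * (2 + b)) =
          (c ^ 3 + (2 + 1) * d ^ 2 - 2 * d) / (b ^ 3 + 2 ^ 3) := by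
  refine ⟨(fun x => x ^ 2), interp, ?_, interp_strictMono, convexOn_pow 2, interp_convex,
    limsup_gt, rfl, rfl, ?_⟩
  · intro x hx y _ hxy
    simpa using pow_lt_pow_left₀ hxy (mem_Ici.mp hx) (by norm_num)
  · intro b c d hb hc hd k
    have hb' : b = bb := hb
    have hc' : c = cc := by
      rw [hc, hb']
      have : ((2:ℝ) + 1) ^ 2 + 4 * 2 ^ 2 + 4 * (2 + 1) * bb = 25 + 12 * bb := by ring
      rw [this]
      norm_num [cc, ss]
    have hd' : d = dd := by rw [hd, hb', hc']; rfl
    rw [hb', hc', hd']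
    have := poa_eq k
    convert this using 2 <;> norm_num
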